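/- For every p with 1 < p < 6/5 there is a constant C_p such that for every u ∈ ℝ, every h₁ ∈ L^∞(ℝ) and every h₂ ∈ L²(ℝ): ∫_ℝ |t|^{2−2p} (1 + |t+u|²)^{−p/2} |h₁(t+u) + h₂(t+u)|^p dt ≤ C_p ( ‖h₁‖_{L^∞(ℝ)}^p + ‖h₂‖_{L²(ℝ)}^p ). -/

import Mathlib

open MeasureTheory Real
open scoped ENNReal NNReal
lemma finA {a : ℝ} (ha : -1 < a) :
    ∫⁻ t in Set.Ioc (0:ℝ) 1, ENNReal.ofReal (t ^ a) < ⊤ := by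
  have hInt : IntegrableOn (fun x : ℝ => x ^ a) (Set.Ioo 0 2) volume :=
    (intervalIntegral.integrableOn_Ioo_rpow_iff (by norm_num)).2 ha
  have h1 : ∫⁻ t in Set.Ioc (0:ℝ) 1, ENNReal.ofReal (t ^ a)
      ≤ ∫⁻ t in Set.Ioo (0:ℝ) 2, ENNReal.ofReal (t ^ a) :=
    lintegral_mono_set (fun x hx => ⟨hx.1, lt_of_le_of_lt hx.2 one_lt_two⟩)
  exact lt_of_le_of_lt (h1.trans (lintegral_mono fun t => Real.ofReal_le_enorm _)) hInt.2

lemma finIoi {b : ℝ} (hb : 1 < b) :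
    ∫⁻ t in Set.Ioi (1:ℝ), ENNReal.ofReal (t ^ (-b)) < ⊤ := by
  have hInt : IntegrableOn (fun x : ℝ => x ^ (-b)) (Set.Ioi 1) volume :=
    integrableOn_Ioi_rpow_of_lt (by linarith) one_pos
  exact lt_of_le_of_lt (lintegral_mono fun t => Real.ofReal_le_enorm _) hInt.2

lemma neg_lintegral (f : ℝ → ℝ≥0∞) (hf : Measurable f) :
    ∫⁻ t : ℝ, f (-t) = ∫⁻ t : ℝ, f t :=
  (Measure.measurePreserving_neg volume).lintegral_comp hf

lemma meas_rpow_of (c : ℝ) : Measurable fun t : ℝ => ENNReal.ofReal (t ^ c) :=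
  (measurable_id.pow measurable_const).ennreal_ofReal

lemma finB {a : ℝ} (ha : -1 < a) (ha0 : a < 0) :
    ∫⁻ t : ℝ, (Set.Icc (-1:ℝ) 1).indicator (fun t => ENNReal.ofReal (|t| ^ a)) t < ⊤ := by
  set g : ℝ → ℝ≥0∞ := (Set.Ioc (0:ℝ) 1).indicator (fun s => ENNReal.ofReal (s ^ a)) with hg
  have hgm : Measurable g := (meas_rpow_of a).indicator measurableSet_Ioc
  have hpt : ∀ t : ℝ, (Set.Icc (-1:ℝ) 1).indicator (fun t => ENNReal.ofReal (|t| ^ a)) t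
      ≤ g t + g (-t) := by
    intro t
    by_cases ht : t ∈ Set.Icc (-1:ℝ) 1
    · rw [Set.indicator_of_mem ht]
      rcases lt_trichotomy t 0 with h | h | h
      · have hmem : -t ∈ Set.Ioc (0:ℝ) 1 := ⟨by linarith, by linarith [ht.1]⟩
        have : |t| = -t := abs_of_neg h
        rw [this, hg]
        have : ENNReal.ofReal ((-t) ^ a) ≤ g t + g (-t) := by
          rw [hg, Set.indicator_of_mem hmem]; exact le_add_self
        exact this
      · simp [h, Real.zero_rpow (ne_of_lt ha0)]
      · have hmem : t ∈ Set.Ioc (0:ℝ) 1 := ⟨h, ht.2⟩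
        have : |t| = t := abs_of_pos h
        rw [this, hg]
        have : ENNReal.ofReal (t ^ a) ≤ g t + g (-t) := by
          rw [hg, Set.indicator_of_mem hmem]; exact le_self_add
        exact this
    · rw [Set.indicator_of_notMem ht]; exact zero_le
  calc ∫⁻ t : ℝ, (Set.Icc (-1:ℝ) 1).indicator (fun t => ENNReal.ofReal (|t| ^ a)) t
      ≤ ∫⁻ t : ℝ, (g t + g (-t)) := lintegral_mono hpt
    _ = (∫⁻ t : ℝ, g t) + ∫⁻ t : ℝ, g (-t) := lintegral_add_left hgm _
    _ = (∫⁻ t : ℝ, g t) + ∫⁻ t : ℝ, g t := by rw [neg_lintegral g hgm]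
    _ < ⊤ := by
        have : ∫⁻ t : ℝ, g t < ⊤ := by
          rw [hg, lintegral_indicator measurableSet_Ioc]
          exact finA ha
        exact ENNReal.add_lt_top.2 ⟨this, this⟩

lemma finC {b : ℝ} (hb : 1 < b) :
    ∫⁻ s : ℝ, ENNReal.ofReal ((1 + s ^ 2) ^ (-(b / 2))) < ⊤ := by
  set k : ℝ → ℝ≥0∞ := (Set.Ioi (1:ℝ)).indicator (fun s => ENNReal.ofReal (s ^ (-b))) with hk
  have hkm : Measurable k := (meas_rpow_of (-b)).indicator measurableSet_Ioi
  have hpt : ∀ s : ℝ, ENNReal.ofReal ((1 + s ^ 2) ^ (-(b / 2)))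
      ≤ (Set.Icc (-1:ℝ) 1).indicator 1 s + (k s + k (-s)) := by
    intro s
    rcases le_or_gt (|s|) 1 with h | h
    · have h1 : (1 + s ^ 2) ^ (-(b / 2)) ≤ 1 :=
        Real.rpow_le_one_of_one_le_of_nonpos (by nlinarith) (by linarith)
      have hmem : s ∈ Set.Icc (-1:ℝ) 1 := abs_le.1 h
      calc ENNReal.ofReal ((1 + s ^ 2) ^ (-(b / 2))) ≤ ENNReal.ofReal 1 :=
            ENNReal.ofReal_le_ofReal h1
        _ = (Set.Icc (-1:ℝ) 1).indicator 1 s := by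
            rw [Set.indicator_of_mem hmem]; simp
        _ ≤ _ := le_self_add
    · have habs : (1 + s ^ 2) ^ (-(b / 2)) ≤ |s| ^ (-b) := by
        have h0 : (0:ℝ) < |s| ^ 2 := by positivity
        have hle : |s| ^ 2 ≤ 1 + s ^ 2 := by rw [sq_abs]; linarith
        have := Real.rpow_le_rpow_of_nonpos h0 hle (by linarith : -(b/2) ≤ 0)
        calc (1 + s ^ 2) ^ (-(b / 2)) ≤ (|s| ^ 2) ^ (-(b / 2)) := this
          _ = |s| ^ (-b) := by
              rw [← Real.rpow_natCast |s| 2, ← Real.rpow_mul (abs_nonneg s)]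
              ring_nf
      rcases lt_or_ge s 0 with hs | hs
      · have hmem : -s ∈ Set.Ioi (1:ℝ) := by
          simp only [Set.mem_Ioi]; rw [abs_of_neg hs] at h; linarith
        have : ENNReal.ofReal ((1 + s ^ 2) ^ (-(b / 2))) ≤ k (-s) := by
          rw [hk, Set.indicator_of_mem hmem]
          exact ENNReal.ofReal_le_ofReal (by rwa [abs_of_neg hs] at habs)
        exact this.trans (le_add_self.trans le_add_self)
      · have hs' : 0 < s := by
          rcases eq_or_lt_of_le hs with h0 | h0
          · exfalso; rw [← h0] at h; simp at h; linarith
          · exact h0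
        have hmem : s ∈ Set.Ioi (1:ℝ) := by
          simp only [Set.mem_Ioi]; rwa [abs_of_pos hs'] at h
        have : ENNReal.ofReal ((1 + s ^ 2) ^ (-(b / 2))) ≤ k s := by
          rw [hk, Set.indicator_of_mem hmem]
          exact ENNReal.ofReal_le_ofReal (by rwa [abs_of_pos hs'] at habs)
        exact this.trans (le_self_add.trans le_add_self)
  calc ∫⁻ s : ℝ, ENNReal.ofReal ((1 + s ^ 2) ^ (-(b / 2)))
      ≤ ∫⁻ s : ℝ, ((Set.Icc (-1:ℝ) 1).indicator 1 s + (k s + k (-s))) := lintegral_mono hpt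
    _ = (∫⁻ s : ℝ, (Set.Icc (-1:ℝ) 1).indicator 1 s) + ∫⁻ s : ℝ, (k s + k (-s)) :=
        lintegral_add_left (measurable_one.indicator measurableSet_Icc) _
    _ = (∫⁻ s : ℝ, (Set.Icc (-1:ℝ) 1).indicator 1 s) + ((∫⁻ s : ℝ, k s) + ∫⁻ s : ℝ, k (-s)) := by
        rw [lintegral_add_left hkm]
    _ < ⊤ := by
        have h1 : ∫⁻ s : ℝ, (Set.Icc (-1:ℝ) 1).indicator 1 s < ⊤ := by
          rw [lintegral_indicator measurableSet_Icc]
          simp [Real.volume_Icc]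
        have h2 : ∫⁻ s : ℝ, k s < ⊤ := by
          rw [hk, lintegral_indicator measurableSet_Ioi]
          exact finIoi hb
        have h3 : ∫⁻ s : ℝ, k (-s) < ⊤ := by rw [neg_lintegral k hkm]; exact h2
        exact ENNReal.add_lt_top.2 ⟨h1, ENNReal.add_lt_top.2 ⟨h2, h3⟩⟩

lemma weight_bound {a b : ℝ} (ha : -1 < a) (ha0 : a < 0) (hb : 1 < b) :
    ∃ C : ℝ≥0∞, C ≠ ⊤ ∧ ∀ u : ℝ,
      (∫⁻ t : ℝ, ENNReal.ofReal (|t| ^ a) *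
        ENNReal.ofReal ((1 + |t + u| ^ 2) ^ (-(b / 2)))) ≤ C := by
  set B := ∫⁻ t : ℝ, (Set.Icc (-1:ℝ) 1).indicator (fun t => ENNReal.ofReal (|t| ^ a)) t with hB
  set K := ∫⁻ s : ℝ, ENNReal.ofReal ((1 + s ^ 2) ^ (-(b / 2))) with hK
  refine ⟨B + K, by
    exact ENNReal.add_ne_top.2 ⟨(finB ha ha0).ne, (finC hb).ne⟩, fun u => ?_⟩
  have hpt : ∀ t : ℝ, ENNReal.ofReal (|t| ^ a) *
      ENNReal.ofReal ((1 + |t + u| ^ 2) ^ (-(b / 2)))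
      ≤ (Set.Icc (-1:ℝ) 1).indicator (fun t => ENNReal.ofReal (|t| ^ a)) t +
        ENNReal.ofReal ((1 + (t + u) ^ 2) ^ (-(b / 2))) := by
    intro t
    rcases le_or_gt (|t|) 1 with h | h
    · have h2 : ENNReal.ofReal ((1 + |t + u| ^ 2) ^ (-(b / 2))) ≤ 1 := by
        rw [← ENNReal.ofReal_one]
        exact ENNReal.ofReal_le_ofReal
          (Real.rpow_le_one_of_one_le_of_nonpos (by nlinarith [sq_nonneg (|t+u|)]) (by linarith))
      calc ENNReal.ofReal (|t| ^ a) * ENNReal.ofReal ((1 + |t + u| ^ 2) ^ (-(b / 2)))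
          ≤ ENNReal.ofReal (|t| ^ a) * 1 := mul_le_mul_right h2 _
        _ = (Set.Icc (-1:ℝ) 1).indicator (fun t => ENNReal.ofReal (|t| ^ a)) t := by
            rw [mul_one, Set.indicator_of_mem (Set.mem_Icc.2 (abs_le.1 h)) (fun t => ENNReal.ofReal (|t| ^ a))]
        _ ≤ _ := le_self_add
    · have h1 : ENNReal.ofReal (|t| ^ a) ≤ 1 := by
        rw [← ENNReal.ofReal_one]
        exact ENNReal.ofReal_le_ofReal
          (Real.rpow_le_one_of_one_le_of_nonpos h.le ha0.le)
      calc ENNReal.ofReal (|t| ^ a) * ENNReal.ofReal ((1 + |t + u| ^ 2) ^ (-(b / 2)))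
          ≤ 1 * ENNReal.ofReal ((1 + |t + u| ^ 2) ^ (-(b / 2))) := mul_le_mul_left h1 _
        _ = ENNReal.ofReal ((1 + (t + u) ^ 2) ^ (-(b / 2))) := by rw [one_mul, sq_abs]
        _ ≤ _ := le_add_self
  calc ∫⁻ t : ℝ, ENNReal.ofReal (|t| ^ a) *
        ENNReal.ofReal ((1 + |t + u| ^ 2) ^ (-(b / 2)))
      ≤ ∫⁻ t : ℝ, ((Set.Icc (-1:ℝ) 1).indicator (fun t => ENNReal.ofReal (|t| ^ a)) t +
          ENNReal.ofReal ((1 + (t + u) ^ 2) ^ (-(b / 2)))) := lintegral_mono hpt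
    _ = B + ∫⁻ t : ℝ, ENNReal.ofReal ((1 + (t + u) ^ 2) ^ (-(b / 2))) :=
        lintegral_add_left (((measurable_abs.pow measurable_const).ennreal_ofReal).indicator
          measurableSet_Icc) _
    _ = B + K := by
        rw [hK, ← lintegral_add_right_eq_self
          (fun s => ENNReal.ofReal ((1 + s ^ 2) ^ (-(b / 2)))) u]

theorem weighted_shift_estimate (p : ℝ) (hp1 : 1 < p) (hp2 : p < 6 / 5) :
    ∃ C : ℝ, 0 < C ∧
      ∀ (u : ℝ) (h₁ h₂ : ℝ → ℂ),
        MemLp h₁ ∞ volume → MemLp h₂ 2 volume →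
        (∫⁻ t : ℝ, ENNReal.ofReal (|t| ^ (2 - 2 * p)) *
            ENNReal.ofReal ((1 + |t + u| ^ 2) ^ (-(p / 2))) *
            (‖h₁ (t + u) + h₂ (t + u)‖₊ : ℝ≥0∞) ^ p ∂volume)
          ≤ ENNReal.ofReal C *
            ((eLpNorm h₁ ∞ volume) ^ p + (eLpNorm h₂ 2 volume) ^ p) := by
  have hp0 : (0:ℝ) < p := by linarith
  have h2p : (0:ℝ) < 2 - p := by linarith
  set r : ℝ := 2 / (2 - p) with hr
  have hr0 : (0:ℝ) < r := by positivity
  set a' : ℝ := (2 - 2 * p) * r with ha'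
  set b' : ℝ := p * r with hb'
  have ha'eq : a' = (4 - 4 * p) / (2 - p) := by rw [ha', hr]; field_simp; ring
  have hb'eq : b' = 2 * p / (2 - p) := by rw [hb', hr]; field_simp
  obtain ⟨C₁, hC₁top, hC₁⟩ := weight_bound (a := 2 - 2 * p) (b := p)
    (by linarith) (by linarith) hp1
  obtain ⟨C₂, hC₂top, hC₂⟩ := weight_bound (a := a') (b := b')
    (by rw [ha'eq, lt_div_iff₀ h2p]; linarith)
    (by rw [ha'eq]; exact div_neg_of_neg_of_pos (by linarith) h2p)
    (by rw [hb'eq]; rw [lt_div_iff₀ h2p]; linarith)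
  set K₂ : ℝ≥0∞ := C₂ ^ ((2 - p) / 2) with hK₂
  have hK₂top : K₂ ≠ ⊤ := ENNReal.rpow_ne_top_of_nonneg (by positivity) hC₂top
  set D : ℝ≥0∞ := (2:ℝ≥0∞) ^ (p - 1) * (C₁ + K₂) with hD
  have h2top : (2:ℝ≥0∞) ^ (p - 1) ≠ ⊤ :=
    ENNReal.rpow_ne_top_of_nonneg (by linarith) (by norm_num)
  have hDtop : D ≠ ⊤ := ENNReal.mul_ne_top h2top (ENNReal.add_ne_top.2 ⟨hC₁top, hK₂top⟩)
  refine ⟨D.toReal + 1, by positivity, fun u h₁ h₂ hm₁ hm₂ => ?_⟩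
  set τ : ℝ → ℝ := fun t => t + u with hτdef
  have hτ : MeasurePreserving τ volume volume := measurePreserving_add_right volume u
  set W : ℝ → ℝ≥0∞ := fun t => ENNReal.ofReal (|t| ^ (2 - 2 * p)) *
      ENNReal.ofReal ((1 + |t + u| ^ 2) ^ (-(p / 2))) with hW
  have hWm : Measurable W := by
    apply Measurable.fun_mul
    · exact (measurable_abs.pow measurable_const).ennreal_ofReal
    · exact ((measurable_const.add ((measurable_id.add_const u).abs.pow_const 2)).pow
        measurable_const).ennreal_ofReal
  set A : ℝ → ℝ≥0∞ := fun t => (‖h₁ (t + u)‖₊ : ℝ≥0∞) ^ p with hA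
  set B : ℝ → ℝ≥0∞ := fun t => (‖h₂ (t + u)‖₊ : ℝ≥0∞) ^ p with hB
  have hmA : AEMeasurable A volume :=
    ((hm₁.aestronglyMeasurable.comp_quasiMeasurePreserving
      hτ.quasiMeasurePreserving).enorm).pow aemeasurable_const
  have hmB : AEMeasurable B volume :=
    ((hm₂.aestronglyMeasurable.comp_quasiMeasurePreserving
      hτ.quasiMeasurePreserving).enorm).pow aemeasurable_const
  set N₁ : ℝ≥0∞ := (eLpNorm h₁ ∞ volume) ^ p with hN₁
  set N₂ : ℝ≥0∞ := (eLpNorm h₂ 2 volume) ^ p with hN₂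
  -- Step 3 : first integral
  have hI₁ : ∫⁻ t : ℝ, W t * A t ≤ C₁ * N₁ := by
    have hMtop : eLpNormEssSup h₁ volume ≠ ⊤ := by
      rw [← eLpNorm_exponent_top]; exact hm₁.2.ne
    have hae : ∀ᵐ t : ℝ ∂volume, (‖h₁ (t + u)‖₊ : ℝ≥0∞) ≤ eLpNormEssSup h₁ volume :=
      hτ.quasiMeasurePreserving.ae (ae_le_eLpNormEssSup)
    calc ∫⁻ t : ℝ, W t * A t
        ≤ ∫⁻ t : ℝ, W t * (eLpNormEssSup h₁ volume) ^ p := by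
          refine lintegral_mono_ae (hae.mono fun t ht => ?_)
          exact mul_le_mul_right (ENNReal.rpow_le_rpow ht hp0.le) _
      _ = (∫⁻ t : ℝ, W t) * (eLpNormEssSup h₁ volume) ^ p :=
          lintegral_mul_const' _ _ (ENNReal.rpow_ne_top_of_nonneg hp0.le hMtop)
      _ ≤ C₁ * (eLpNormEssSup h₁ volume) ^ p := mul_le_mul_left (hC₁ u) _
      _ = C₁ * N₁ := by rw [hN₁, eLpNorm_exponent_top]
  -- Step 4 : second integral (Hölder)
  have hI₂ : ∫⁻ t : ℝ, W t * B t ≤ K₂ * N₂ := by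
    have hconj : Real.HolderConjugate r (2 / p) := by
      rw [Real.holderConjugate_iff]; constructor
      · rw [hr, lt_div_iff₀ h2p]; linarith
      · rw [hr]; field_simp; ring
    have hBpow : ∀ t : ℝ, B t ^ (2 / p) = (‖h₂ (t + u)‖₊ : ℝ≥0∞) ^ (2:ℝ) := by
      intro t
      rw [hB, ← ENNReal.rpow_mul]
      congr 1
      field_simp
    have h1pt : (0:ℝ) ≤ 1 → True := fun _ => trivial
    have hWpow : ∀ t : ℝ, W t ^ r =
        ENNReal.ofReal (|t| ^ a') * ENNReal.ofReal ((1 + |t + u| ^ 2) ^ (-(b' / 2))) := by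
      intro t
      have hbase : (0:ℝ) ≤ 1 + |t + u| ^ 2 := by positivity
      rw [hW]
      rw [ENNReal.mul_rpow_of_nonneg _ _ hr0.le,
        ENNReal.ofReal_rpow_of_nonneg (Real.rpow_nonneg (abs_nonneg t) _) hr0.le,
        ENNReal.ofReal_rpow_of_nonneg (Real.rpow_nonneg hbase _) hr0.le,
        ← Real.rpow_mul (abs_nonneg t), ← Real.rpow_mul hbase]
      congr 2
      rw [hb']; ring
    have h2int : ∫⁻ t : ℝ, B t ^ (2 / p) = ∫⁻ s : ℝ, (‖h₂ s‖₊ : ℝ≥0∞) ^ (2:ℝ) := by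
      simp_rw [hBpow]
      exact lintegral_add_right_eq_self (fun s => (‖h₂ s‖₊ : ℝ≥0∞) ^ (2:ℝ)) u
    have hN2eq : N₂ = (∫⁻ s : ℝ, (‖h₂ s‖₊ : ℝ≥0∞) ^ (2:ℝ)) ^ (p / 2) := by
      rw [hN₂, eLpNorm_eq_lintegral_rpow_enorm_toReal two_ne_zero ENNReal.ofNat_ne_top]
      simp only [ENNReal.toReal_ofNat]
      rw [← ENNReal.rpow_mul]
      congr 1; ring
    calc ∫⁻ t : ℝ, W t * B t
        ≤ (∫⁻ t : ℝ, W t ^ r) ^ (1 / r) * (∫⁻ t : ℝ, B t ^ (2 / p)) ^ (1 / (2 / p)) :=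
          ENNReal.lintegral_mul_le_Lp_mul_Lq volume hconj hWm.aemeasurable hmB
      _ ≤ C₂ ^ (1 / r) * (∫⁻ t : ℝ, B t ^ (2 / p)) ^ (1 / (2 / p)) := by
          refine mul_le_mul_left (ENNReal.rpow_le_rpow ?_ (by positivity)) _
          calc ∫⁻ t : ℝ, W t ^ r
              = ∫⁻ t : ℝ, ENNReal.ofReal (|t| ^ a') *
                  ENNReal.ofReal ((1 + |t + u| ^ 2) ^ (-(b' / 2))) := lintegral_congr hWpow
            _ ≤ C₂ := hC₂ u
      _ = K₂ * N₂ := by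
          rw [h2int, hN2eq, hK₂]
          congr 1
          · congr 1
            rw [hr, one_div_div]
          · congr 1
            rw [one_div_div]
  -- pointwise bound and conclusion
  have hptw : ∀ t : ℝ, ENNReal.ofReal (|t| ^ (2 - 2 * p)) *
      ENNReal.ofReal ((1 + |t + u| ^ 2) ^ (-(p / 2))) *
      (‖h₁ (t + u) + h₂ (t + u)‖₊ : ℝ≥0∞) ^ p
      ≤ (2:ℝ≥0∞) ^ (p - 1) * (W t * A t + W t * B t) := by
    intro t
    have h1 : (‖h₁ (t + u) + h₂ (t + u)‖₊ : ℝ≥0∞) ^ p ≤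
        ((‖h₁ (t + u)‖₊ : ℝ≥0∞) + (‖h₂ (t + u)‖₊ : ℝ≥0∞)) ^ p := by
      refine ENNReal.rpow_le_rpow ?_ hp0.le
      exact_mod_cast nnnorm_add_le _ _
    have h2 := ENNReal.rpow_add_le_mul_rpow_add_rpow
      (‖h₁ (t + u)‖₊ : ℝ≥0∞) (‖h₂ (t + u)‖₊ : ℝ≥0∞) hp1.le
    calc ENNReal.ofReal (|t| ^ (2 - 2 * p)) *
        ENNReal.ofReal ((1 + |t + u| ^ 2) ^ (-(p / 2))) *
        (‖h₁ (t + u) + h₂ (t + u)‖₊ : ℝ≥0∞) ^ p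
        ≤ W t * ((2:ℝ≥0∞) ^ (p - 1) * (A t + B t)) :=
          mul_le_mul_right (h1.trans h2) (W t)
      _ = (2:ℝ≥0∞) ^ (p - 1) * (W t * A t + W t * B t) := by ring
  calc (∫⁻ t : ℝ, ENNReal.ofReal (|t| ^ (2 - 2 * p)) *
          ENNReal.ofReal ((1 + |t + u| ^ 2) ^ (-(p / 2))) *
          (‖h₁ (t + u) + h₂ (t + u)‖₊ : ℝ≥0∞) ^ p ∂volume)
      ≤ ∫⁻ t : ℝ, (2:ℝ≥0∞) ^ (p - 1) * (W t * A t + W t * B t) := lintegral_mono hptw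
    _ = (2:ℝ≥0∞) ^ (p - 1) * ∫⁻ t : ℝ, (W t * A t + W t * B t) :=
        lintegral_const_mul' _ _ h2top
    _ = (2:ℝ≥0∞) ^ (p - 1) * ((∫⁻ t : ℝ, W t * A t) + ∫⁻ t : ℝ, W t * B t) := by
        rw [lintegral_add_left' (hWm.aemeasurable.fun_mul hmA)]
    _ ≤ (2:ℝ≥0∞) ^ (p - 1) * (C₁ * N₁ + K₂ * N₂) :=
        mul_le_mul_right (add_le_add hI₁ hI₂) _
    _ ≤ (2:ℝ≥0∞) ^ (p - 1) * ((C₁ + K₂) * N₁ + (C₁ + K₂) * N₂) :=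
        mul_le_mul_right (add_le_add (mul_le_mul_left le_self_add _)
          (mul_le_mul_left le_add_self _)) _
    _ = D * (N₁ + N₂) := by rw [hD]; ring
    _ ≤ ENNReal.ofReal (D.toReal + 1) * (N₁ + N₂) := by
        refine mul_le_mul_left ?_ _
        calc D = ENNReal.ofReal D.toReal := (ENNReal.ofReal_toReal hDtop).symm
          _ ≤ ENNReal.ofReal (D.toReal + 1) :=
              ENNReal.ofReal_le_ofReal (le_add_of_nonneg_right zero_le_one)
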